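/- Let H be a Hopf algebra over a field k and R a commutative k-algebra. If σ and τ are convolution-invertible normalized lazy left 2-cocycles of H with coefficients in R, then their convolution product σ * τ is again a convolution-invertible normalized lazy left 2-cocycle; in particular the set Z²_ℓ(H,R) of convolution-invertible normalized lazy left 2-cocycles is a group under the convolution product. -/

import Mathlib

open TensorProduct

section LazyCocycles

variable (k : Type*) [Field k] (H : Type*) [Ring H] [HopfAlgebra k H]
variable (R : Type*) [CommRing R] [Algebra k R]

/-- The convolution product of linear maps `H ⊗ H → R`, where `H ⊗ H` carries
the tensor-product coalgebra structure:
`(σ * τ)(x ⊗ y) = σ(x₁ ⊗ y₁) τ(x₂ ⊗ y₂)`. -/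
noncomputable def conv2 (σ τ : H ⊗[k] H →ₗ[k] R) : H ⊗[k] H →ₗ[k] R :=
  LinearMap.mul' k R ∘ₗ TensorProduct.map σ τ ∘ₗ
    Coalgebra.comul (R := k) (A := H ⊗[k] H)

/-- The unit `η_R ∘ ε_{H⊗H}` of the convolution monoid. -/
noncomputable def convUnit2 : H ⊗[k] H →ₗ[k] R :=
  Algebra.linearMap k R ∘ₗ Coalgebra.counit (R := k) (A := H ⊗[k] H)

/-- Convolution invertibility for maps `H ⊗ H → R`. -/
def IsConvInvertible2 (σ : H ⊗[k] H →ₗ[k] R) : Prop :=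
  ∃ σ' : H ⊗[k] H →ₗ[k] R,
    conv2 k H R σ σ' = convUnit2 k H R ∧ conv2 k H R σ' σ = convUnit2 k H R

/-- `σ` is normalized: `σ(x ⊗ 1) = ε(x)·1_R = σ(1 ⊗ x)`. -/
def IsNormalized2 (σ : H ⊗[k] H →ₗ[k] R) : Prop :=
  (∀ x : H, σ (x ⊗ₜ[k] (1 : H)) = algebraMap k R (Coalgebra.counit (R := k) x)) ∧
  (∀ x : H, σ ((1 : H) ⊗ₜ[k] x) = algebraMap k R (Coalgebra.counit (R := k) x))

/-- `σ` is lazy: `σ(x₁ ⊗ y₁) ⊗ x₂y₂ = σ(x₂ ⊗ y₂) ⊗ x₁y₁` in `R ⊗ H`. -/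
def IsLazy2 (σ : H ⊗[k] H →ₗ[k] R) : Prop :=
  ∀ x y : H,
    TensorProduct.map σ (LinearMap.mul' k H)
        (Coalgebra.comul (R := k) (x ⊗ₜ[k] y))
      = TensorProduct.map σ (LinearMap.mul' k H)
          ((TensorProduct.comm k (H ⊗[k] H) (H ⊗[k] H))
            (Coalgebra.comul (R := k) (x ⊗ₜ[k] y)))

/-- The linear map `(x ⊗ y) ⊗ z ↦ σ(x₁ ⊗ y₁) σ(x₂y₂ ⊗ z)`. -/
noncomputable def cocycleLHS (σ : H ⊗[k] H →ₗ[k] R) :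
    (H ⊗[k] H) ⊗[k] H →ₗ[k] R :=
  LinearMap.mul' k R ∘ₗ
    TensorProduct.map σ
      (σ ∘ₗ TensorProduct.map (LinearMap.mul' k H) (LinearMap.id : H →ₗ[k] H)) ∘ₗ
    (TensorProduct.assoc k (H ⊗[k] H) (H ⊗[k] H) H).toLinearMap ∘ₗ
    TensorProduct.map (Coalgebra.comul (R := k) (A := H ⊗[k] H))
      (LinearMap.id : H →ₗ[k] H)

/-- The linear map `x ⊗ (y ⊗ z) ↦ σ(y₁ ⊗ z₁) σ(x ⊗ y₂z₂)`. -/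
noncomputable def cocycleRHS (σ : H ⊗[k] H →ₗ[k] R) :
    H ⊗[k] (H ⊗[k] H) →ₗ[k] R :=
  LinearMap.mul' k R ∘ₗ
    TensorProduct.map σ
      (σ ∘ₗ TensorProduct.map (LinearMap.id : H →ₗ[k] H) (LinearMap.mul' k H)) ∘ₗ
    (TensorProduct.leftComm k H (H ⊗[k] H) (H ⊗[k] H)).toLinearMap ∘ₗ
    TensorProduct.map (LinearMap.id : H →ₗ[k] H)
      (Coalgebra.comul (R := k) (A := H ⊗[k] H))

/-- `σ` is a left 2-cocycle:
`σ(x₁ ⊗ y₁) σ(x₂y₂ ⊗ z) = σ(y₁ ⊗ z₁) σ(x ⊗ y₂z₂)` for all `x, y, z ∈ H`. -/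
def IsCocycle (σ : H ⊗[k] H →ₗ[k] R) : Prop :=
  ∀ x y z : H,
    cocycleLHS k H R σ ((x ⊗ₜ[k] y) ⊗ₜ[k] z)
      = cocycleRHS k H R σ (x ⊗ₜ[k] (y ⊗ₜ[k] z))

/-- Membership in `Z²_ℓ(H,R)`: convolution-invertible normalized lazy left
2-cocycles. -/
def MemZ2ℓ (σ : H ⊗[k] H →ₗ[k] R) : Prop :=
  IsConvInvertible2 k H R σ ∧ IsNormalized2 k H R σ ∧ IsLazy2 k H R σ ∧
    IsCocycle k H R σ

-- ===== auxiliary development =====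
namespace LazyAux
variable {k : Type*} [CommSemiring k]

section Conv
variable {C A : Type*} [AddCommMonoid C] [Module k C] [CoalgebraStruct k C]
  [Semiring A] [Algebra k A]

noncomputable def conv (f g : C →ₗ[k] A) : C →ₗ[k] A :=
  LinearMap.mul' k A ∘ₗ TensorProduct.map f g ∘ₗ CoalgebraStruct.comul

noncomputable def convOne : C →ₗ[k] A :=
  Algebra.linearMap k A ∘ₗ CoalgebraStruct.counit

lemma conv_apply_repr (f g : C →ₗ[k] A) {a : C} {ι : Type*} (r : Coalgebra.Repr k a ι) :
    conv f g a = ∑ i ∈ r.index, f (r.left i) * g (r.right i) := by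
  simp [conv, ← r.eq, map_sum]

lemma convOne_apply (a : C) :
    convOne (k := k) (C := C) (A := A) a
      = algebraMap k A (CoalgebraStruct.counit (R := k) a) := rfl

lemma conv_add_left (f f' g : C →ₗ[k] A) : conv (f + f') g = conv f g + conv f' g := by
  ext a
  simp [conv_apply_repr _ _ (Coalgebra.Repr.arbitrary k a), add_mul, Finset.sum_add_distrib]

lemma conv_add_right (f g g' : C →ₗ[k] A) : conv f (g + g') = conv f g + conv f g' := by
  ext a
  simp [conv_apply_repr _ _ (Coalgebra.Repr.arbitrary k a), mul_add, Finset.sum_add_distrib]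

lemma conv_zero_left (g : C →ₗ[k] A) : conv (0 : C →ₗ[k] A) g = 0 := by
  ext a; simp [conv_apply_repr _ _ (Coalgebra.Repr.arbitrary k a)]

lemma conv_zero_right (f : C →ₗ[k] A) : conv f (0 : C →ₗ[k] A) = 0 := by
  ext a; simp [conv_apply_repr _ _ (Coalgebra.Repr.arbitrary k a)]

lemma conv_smul_left (c : k) (f g : C →ₗ[k] A) : conv (c • f) g = c • conv f g := by
  ext a
  simp [conv_apply_repr _ _ (Coalgebra.Repr.arbitrary k a), Finset.smul_sum, smul_mul_assoc]

lemma conv_smul_right (c : k) (f g : C →ₗ[k] A) : conv f (c • g) = c • conv f g := by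
  ext a
  simp [conv_apply_repr _ _ (Coalgebra.Repr.arbitrary k a), Finset.smul_sum, mul_smul_comm]


end Conv

section ConvLaws
variable {C A : Type*} [AddCommMonoid C] [Module k C] [Coalgebra k C]
  [Semiring A] [Algebra k A]

open Coalgebra

lemma sum_counit_smul {V : Type*} [AddCommMonoid V] [Module k V]
    {a : C} {ι : Type*} (r : Coalgebra.Repr k a ι) (v : C →ₗ[k] V) :
    ∑ i ∈ r.index, CoalgebraStruct.counit (R := k) (r.left i) • v (r.right i) = v a := by
  have h := Coalgebra.sum_counit_tmul_eq (R := k) r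
  have h2 := congrArg (fun t => (v ∘ₗ (TensorProduct.lid k C).toLinearMap) t) h
  simpa only [map_sum, LinearMap.comp_apply, LinearEquiv.coe_coe, lid_tmul, one_smul,
    map_smul] using h2

lemma sum_smul_counit {V : Type*} [AddCommMonoid V] [Module k V]
    {a : C} {ι : Type*} (r : Coalgebra.Repr k a ι) (v : C →ₗ[k] V) :
    ∑ i ∈ r.index, CoalgebraStruct.counit (R := k) (r.right i) • v (r.left i) = v a := by
  have h := Coalgebra.sum_tmul_counit_eq (R := k) r
  have h2 := congrArg (fun t => (v ∘ₗ (TensorProduct.rid k C).toLinearMap) t) h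
  simpa only [map_sum, LinearMap.comp_apply, LinearEquiv.coe_coe, rid_tmul, one_smul,
    map_smul] using h2

lemma conv_one (f : C →ₗ[k] A) : conv f (convOne (k := k)) = f := by
  ext a
  rw [conv_apply_repr f _ (Coalgebra.Repr.arbitrary k a)]
  simp only [convOne_apply]
  calc ∑ i ∈ (Coalgebra.Repr.arbitrary k a).index,
        f ((Coalgebra.Repr.arbitrary k a).left i) *
          algebraMap k A (CoalgebraStruct.counit (R := k) ((Coalgebra.Repr.arbitrary k a).right i))
      = ∑ i ∈ (Coalgebra.Repr.arbitrary k a).index,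
        CoalgebraStruct.counit (R := k) ((Coalgebra.Repr.arbitrary k a).right i) •
          f ((Coalgebra.Repr.arbitrary k a).left i) := by
        refine Finset.sum_congr rfl fun i _ => ?_
        rw [Algebra.smul_def]
        exact (Algebra.commutes _ _).symm
    _ = f a := sum_smul_counit _ f

lemma one_conv (f : C →ₗ[k] A) : conv (convOne (k := k)) f = f := by
  ext a
  rw [conv_apply_repr _ f (Coalgebra.Repr.arbitrary k a)]
  simp only [convOne_apply]
  calc ∑ i ∈ (Coalgebra.Repr.arbitrary k a).index,
        algebraMap k A (CoalgebraStruct.counit (R := k) ((Coalgebra.Repr.arbitrary k a).left i)) *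
          f ((Coalgebra.Repr.arbitrary k a).right i)
      = ∑ i ∈ (Coalgebra.Repr.arbitrary k a).index,
        CoalgebraStruct.counit (R := k) ((Coalgebra.Repr.arbitrary k a).left i) •
          f ((Coalgebra.Repr.arbitrary k a).right i) := by
        refine Finset.sum_congr rfl fun i _ => ?_
        rw [Algebra.smul_def]
    _ = f a := sum_counit_smul _ f

lemma conv_assoc (f g h : C →ₗ[k] A) :
    conv (conv f g) h = conv f (conv g h) := by
  ext a
  set r := Coalgebra.Repr.arbitrary k a
  rw [conv_apply_repr (conv f g) h r, conv_apply_repr f (conv g h) r]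
  have key := Coalgebra.sum_map_tmul_tmul_eq (R := k) f g h a (repr := r)
    (a₁ := fun i => Coalgebra.Repr.arbitrary k (r.left i))
    (a₂ := fun i => Coalgebra.Repr.arbitrary k (r.right i))
  have := congrArg (fun t => (LinearMap.mul' k A ∘ₗ
      LinearMap.lTensor A (LinearMap.mul' k A)) t) key
  simp only [map_sum, LinearMap.comp_apply, LinearMap.lTensor_tmul,
    LinearMap.mul'_apply] at this
  calc ∑ i ∈ r.index, conv f g (r.left i) * h (r.right i)
      = ∑ i ∈ r.index, ∑ j ∈ (Coalgebra.Repr.arbitrary k (r.left i)).index,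
          f ((Coalgebra.Repr.arbitrary k (r.left i)).left j) *
            (g ((Coalgebra.Repr.arbitrary k (r.left i)).right j) * h (r.right i)) := by
        refine Finset.sum_congr rfl fun i _ => ?_
        rw [conv_apply_repr f g (Coalgebra.Repr.arbitrary k (r.left i)), Finset.sum_mul]
        simp [mul_assoc]
    _ = ∑ i ∈ r.index, ∑ j ∈ (Coalgebra.Repr.arbitrary k (r.right i)).index,
          f (r.left i) * (g ((Coalgebra.Repr.arbitrary k (r.right i)).left j) *
            h ((Coalgebra.Repr.arbitrary k (r.right i)).right j)) := this.symm
    _ = ∑ i ∈ r.index, f (r.left i) * conv g h (r.right i) := by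
        refine Finset.sum_congr rfl fun i _ => ?_
        rw [conv_apply_repr g h (Coalgebra.Repr.arbitrary k (r.right i)), Finset.mul_sum]

end ConvLaws
end LazyAux

namespace LazyAux
variable {k : Type*} [CommSemiring k]

section Instances
variable {C A : Type*} [AddCommMonoid C] [Module k C] [Coalgebra k C]
  [Semiring A] [Algebra k A]

noncomputable scoped instance convSemiring : Semiring (C →ₗ[k] A) :=
  { (inferInstance : AddCommMonoid (C →ₗ[k] A)) with
    mul := conv
    one := convOne
    left_distrib := conv_add_right
    right_distrib := fun f f' g => conv_add_left f f' g
    zero_mul := conv_zero_left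
    mul_zero := conv_zero_right
    mul_assoc := conv_assoc
    one_mul := one_conv
    mul_one := conv_one }

noncomputable scoped instance convAlgebra : Algebra k (C →ₗ[k] A) :=
  Algebra.ofModule (fun c f g => conv_smul_left c f g) (fun c f g => conv_smul_right c f g)

lemma mul_def (f g : C →ₗ[k] A) : f * g = conv f g := rfl
lemma one_def : (1 : C →ₗ[k] A) = convOne := rfl

end Instances
end LazyAux

namespace LazyAux
variable {k : Type*} [CommSemiring k]

section Curry
variable {C D A : Type*} [AddCommMonoid C] [Module k C] [CoalgebraStruct k C]
  [AddCommMonoid D] [Module k D] [CoalgebraStruct k D]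
  [Semiring A] [Algebra k A]

/-- Combine representations of `x` and `y` into one of `x ⊗ₜ y`. -/
noncomputable def reprTmul {x : C} {y : D} {ι κ : Type*} (rx : Coalgebra.Repr k x ι)
    (ry : Coalgebra.Repr k y κ) : Coalgebra.Repr k (x ⊗ₜ[k] y) (ι × κ) where
  index := rx.index ×ˢ ry.index
  left p := rx.left p.1 ⊗ₜ[k] ry.left p.2
  right p := rx.right p.1 ⊗ₜ[k] ry.right p.2
  eq := by
    have : CoalgebraStruct.comul (R := k) (x ⊗ₜ[k] y)
        = TensorProduct.tensorTensorTensorComm k C C D D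
            (CoalgebraStruct.comul (R := k) x ⊗ₜ[k] CoalgebraStruct.comul (R := k) y) := rfl
    rw [this, ← rx.eq, ← ry.eq]
    simp only [TensorProduct.sum_tmul, TensorProduct.tmul_sum, map_sum,
      TensorProduct.tensorTensorTensorComm_tmul, Finset.sum_product]
    rw [Finset.sum_comm]

lemma conv_tmul (f g : C ⊗[k] D →ₗ[k] A) {x : C} {y : D}
    {ι κ : Type*} (rx : Coalgebra.Repr k x ι) (ry : Coalgebra.Repr k y κ) :
    conv f g (x ⊗ₜ[k] y) = ∑ i ∈ rx.index, ∑ j ∈ ry.index,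
      f (rx.left i ⊗ₜ[k] ry.left j) * g (rx.right i ⊗ₜ[k] ry.right j) := by
  rw [conv_apply_repr f g (reprTmul rx ry)]
  simp only [reprTmul]
  rw [Finset.sum_product]

end Curry

section Curry2
variable {C D A : Type*} [AddCommMonoid C] [Module k C] [CoalgebraStruct k C]
  [AddCommMonoid D] [Module k D] [Coalgebra k D]
  [Semiring A] [Algebra k A]

lemma curry_conv (f g : C ⊗[k] D →ₗ[k] A) :
    TensorProduct.curry (conv f g)
      = conv (TensorProduct.curry f) (TensorProduct.curry g) := by
  refine LinearMap.ext fun x => LinearMap.ext fun y => ?_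
  set rx := Coalgebra.Repr.arbitrary k x
  set ry := Coalgebra.Repr.arbitrary k y
  have lhs : TensorProduct.curry (conv f g) x y = conv f g (x ⊗ₜ[k] y) := rfl
  rw [lhs, conv_tmul f g rx ry]
  have rhs : conv (TensorProduct.curry f) (TensorProduct.curry g) x
      = ∑ i ∈ rx.index, TensorProduct.curry f (rx.left i) * TensorProduct.curry g (rx.right i) :=
    conv_apply_repr _ _ rx
  rw [rhs]
  rw [LinearMap.sum_apply]
  refine Finset.sum_congr rfl fun i _ => ?_
  have : (TensorProduct.curry f (rx.left i) * TensorProduct.curry g (rx.right i))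
      = conv (TensorProduct.curry f (rx.left i)) (TensorProduct.curry g (rx.right i)) := rfl
  rw [this, conv_apply_repr _ _ ry]
  rfl

end Curry2
end LazyAux

namespace LazyAux
variable {k : Type*} [CommSemiring k]

/-- The three convolution monoid laws, bundled. -/
def ConvLaws (k : Type*) [CommSemiring k] (C A : Type*) [AddCommMonoid C] [Module k C]
    [CoalgebraStruct k C] [Semiring A] [Algebra k A] : Prop :=
  (∀ f g h : C →ₗ[k] A, conv (conv f g) h = conv f (conv g h)) ∧
  (∀ f : C →ₗ[k] A, conv f convOne = f) ∧
  (∀ f : C →ₗ[k] A, conv convOne f = f)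

lemma convLaws_base {C A : Type*} [AddCommMonoid C] [Module k C] [Coalgebra k C]
    [Semiring A] [Algebra k A] : ConvLaws k C A :=
  ⟨conv_assoc, conv_one, one_conv⟩

section Curry3
variable {C D A : Type*} [AddCommMonoid C] [Module k C] [CoalgebraStruct k C]
  [AddCommMonoid D] [Module k D] [Coalgebra k D]
  [Semiring A] [Algebra k A]

lemma algebraMap_hom_apply (c : k) :
    algebraMap k (D →ₗ[k] A) c = c • (convOne (k := k) (C := D) (A := A)) := by
  rw [← mul_one (algebraMap k (D →ₗ[k] A) c), ← Algebra.smul_def]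
  rfl

lemma curry_one :
    TensorProduct.curry (convOne (k := k) (C := C ⊗[k] D) (A := A))
      = convOne (k := k) (C := C) (A := D →ₗ[k] A) := by
  refine LinearMap.ext fun x => LinearMap.ext fun y => ?_
  have h1 : TensorProduct.curry (convOne (k := k) (C := C ⊗[k] D) (A := A)) x y
      = algebraMap k A (CoalgebraStruct.counit (R := k) x * CoalgebraStruct.counit (R := k) y) := by
    show algebraMap k A (CoalgebraStruct.counit (R := k) (x ⊗ₜ[k] y)) = _
    rw [TensorProduct.counit_tmul, smul_eq_mul, mul_comm]
  have h2 : convOne (k := k) (C := C) (A := D →ₗ[k] A) x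
      = algebraMap k (D →ₗ[k] A) (CoalgebraStruct.counit (R := k) x) := rfl
  rw [h1, h2, algebraMap_hom_apply, map_mul, LinearMap.smul_apply, convOne_apply,
    ← Algebra.smul_def]

lemma convLaws_tensor (hC : ConvLaws k C (D →ₗ[k] A)) : ConvLaws k (C ⊗[k] D) A := by
  obtain ⟨ha, hr, hl⟩ := hC
  refine ⟨fun f g h => ?_, fun f => ?_, fun f => ?_⟩
  · apply TensorProduct.curry_injective
    rw [curry_conv, curry_conv, curry_conv, curry_conv, ha]
  · apply TensorProduct.curry_injective
    rw [curry_conv, curry_one]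
    exact hr _
  · apply TensorProduct.curry_injective
    rw [curry_conv, curry_one]
    exact hl _

end Curry3

section Abstract
variable {C A : Type*} [AddCommMonoid C] [Module k C] [CoalgebraStruct k C]
  [Semiring A] [Algebra k A]

lemma ConvLaws.inv_unique (hL : ConvLaws k C A) {f g g' : C →ₗ[k] A}
    (h1 : conv f g = convOne) (h2 : conv g' f = convOne) : g = g' := by
  have : conv g' (conv f g) = g' := by rw [h1]; exact hL.2.1 g'
  rw [← hL.1 g' f g, h2, hL.2.2] at this
  exact this

lemma ConvLaws.commute_inv (hL : ConvLaws k C A) {a a' b : C →ₗ[k] A}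
    (hab : conv a b = conv b a) (h1 : conv a a' = convOne) (h2 : conv a' a = convOne) :
    conv a' b = conv b a' := by
  have key1 : conv (conv a' b) a = b := by
    rw [hL.1 a' b a, ← hab, ← hL.1 a' a b, h2, hL.2.2]
  calc conv a' b = conv (conv a' b) (conv a a') := by rw [h1, hL.2.1]
    _ = conv (conv (conv a' b) a) a' := by rw [← hL.1]
    _ = conv b a' := by rw [key1]

lemma ConvLaws.commute_mul (hL : ConvLaws k C A) {a b c : C →ₗ[k] A}
    (hac : conv a c = conv c a) (hbc : conv b c = conv c b) :
    conv (conv a b) c = conv c (conv a b) := by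
  rw [hL.1, hbc, ← hL.1, hac, hL.1]

end Abstract
section Cocycle
open Coalgebra
variable {k : Type*} [Field k] {H : Type*} [Ring H] [HopfAlgebra k H]
variable {R : Type*} [CommRing R] [Algebra k R]

/-- Representation of `comul (x * y)` from representations of `x` and `y`. -/
noncomputable def reprMul {x y : H} {ι κ : Type*} (rx : Coalgebra.Repr k x ι) (ry : Coalgebra.Repr k y κ) :
    Coalgebra.Repr k (x * y) (ι × κ) where
  index := rx.index ×ˢ ry.index
  left p := rx.left p.1 * ry.left p.2
  right p := rx.right p.1 * ry.right p.2
  eq := by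
    rw [Bialgebra.comul_mul, ← rx.eq, ← ry.eq, Finset.sum_mul_sum]
    rw [Finset.sum_product]
    simp [Algebra.TensorProduct.tmul_mul_tmul]

lemma lazy_sum {σ : H ⊗[k] H →ₗ[k] R} (hσ : IsLazy2 k H R σ) (x y : H)
    {ι κ : Type*} (rx : Coalgebra.Repr k x ι) (ry : Coalgebra.Repr k y κ) :
    ∑ i ∈ rx.index, ∑ j ∈ ry.index,
        σ (rx.left i ⊗ₜ[k] ry.left j) ⊗ₜ[k] (rx.right i * ry.right j)
      = ∑ i ∈ rx.index, ∑ j ∈ ry.index,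
          σ (rx.right i ⊗ₜ[k] ry.right j) ⊗ₜ[k] (rx.left i * ry.left j) := by
  have h := hσ x y
  rw [← (reprTmul rx ry).eq] at h
  simp only [map_sum, TensorProduct.map_tmul, reprTmul, LinearMap.mul'_apply,
    TensorProduct.comm_tmul, Finset.sum_product] at h
  exact h

variable (k H)

/-- `(x ⊗ y) ⊗ z ↦ ε(z) • (x ⊗ y)`. -/
noncomputable def e1 : (H ⊗[k] H) ⊗[k] H →ₗ[k] H ⊗[k] H :=
  (TensorProduct.rid k (H ⊗[k] H)).toLinearMap ∘ₗ
    LinearMap.lTensor (H ⊗[k] H) (CoalgebraStruct.counit (R := k) (A := H))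

/-- `(x ⊗ y) ⊗ z ↦ ε(x) • (y ⊗ z)`. -/
noncomputable def e2 : (H ⊗[k] H) ⊗[k] H →ₗ[k] H ⊗[k] H :=
  (TensorProduct.lid k (H ⊗[k] H)).toLinearMap ∘ₗ
    LinearMap.rTensor (H ⊗[k] H) (CoalgebraStruct.counit (R := k) (A := H)) ∘ₗ
    (TensorProduct.assoc k H H H).toLinearMap

/-- `(x ⊗ y) ⊗ z ↦ (x * y) ⊗ z`. -/
noncomputable def e12 : (H ⊗[k] H) ⊗[k] H →ₗ[k] H ⊗[k] H :=
  LinearMap.rTensor H (LinearMap.mul' k H)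

/-- `(x ⊗ y) ⊗ z ↦ x ⊗ (y * z)`. -/
noncomputable def e23 : (H ⊗[k] H) ⊗[k] H →ₗ[k] H ⊗[k] H :=
  LinearMap.lTensor H (LinearMap.mul' k H) ∘ₗ (TensorProduct.assoc k H H H).toLinearMap

variable {k H}

@[simp] lemma e1_tmul (x y z : H) :
    e1 k H ((x ⊗ₜ[k] y) ⊗ₜ[k] z) = CoalgebraStruct.counit (R := k) z • (x ⊗ₜ[k] y) := by
  simp [e1]

@[simp] lemma e2_tmul (x y z : H) :
    e2 k H ((x ⊗ₜ[k] y) ⊗ₜ[k] z) = CoalgebraStruct.counit (R := k) x • (y ⊗ₜ[k] z) := by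
  simp [e2]

@[simp] lemma e12_tmul (x y z : H) :
    e12 k H ((x ⊗ₜ[k] y) ⊗ₜ[k] z) = (x * y) ⊗ₜ[k] z := by
  simp [e12]

@[simp] lemma e23_tmul (x y z : H) :
    e23 k H ((x ⊗ₜ[k] y) ⊗ₜ[k] z) = x ⊗ₜ[k] (y * z) := by
  simp [e23]

lemma conv_tmul3 (f g : (H ⊗[k] H) ⊗[k] H →ₗ[k] R) (x y z : H) :
    conv f g ((x ⊗ₜ[k] y) ⊗ₜ[k] z)
      = ∑ i ∈ (ℛ k x).index, ∑ j ∈ (ℛ k y).index, ∑ l ∈ (ℛ k z).index,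
          f (((ℛ k x).left i ⊗ₜ[k] (ℛ k y).left j) ⊗ₜ[k] (ℛ k z).left l) *
            g (((ℛ k x).right i ⊗ₜ[k] (ℛ k y).right j) ⊗ₜ[k] (ℛ k z).right l) := by
  rw [conv_tmul f g (reprTmul (ℛ k x) (ℛ k y)) (ℛ k z)]
  simp only [reprTmul]
  rw [Finset.sum_product]

-- collapse helpers
lemma collapse_scalar_left {z : H} {ι : Type*} (rz : Coalgebra.Repr k z ι) (c : R) (v : H →ₗ[k] R) :
    ∑ l ∈ rz.index,
        (CoalgebraStruct.counit (R := k) (rz.left l) • c) * v (rz.right l) = c * v z := by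
  have h := sum_counit_smul rz (LinearMap.mulLeft k c ∘ₗ v)
  simp only [LinearMap.comp_apply, LinearMap.mulLeft_apply] at h
  rw [← h]
  refine Finset.sum_congr rfl fun l _ => ?_
  rw [smul_mul_assoc]

lemma collapse_scalar_right {z : H} {ι : Type*} (rz : Coalgebra.Repr k z ι) (c : R) (v : H →ₗ[k] R) :
    ∑ l ∈ rz.index,
        v (rz.left l) * (CoalgebraStruct.counit (R := k) (rz.right l) • c) = v z * c := by
  have h := sum_smul_counit rz (LinearMap.mulRight k c ∘ₗ v)
  simp only [LinearMap.comp_apply, LinearMap.mulRight_apply] at h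
  rw [← h]
  refine Finset.sum_congr rfl fun l _ => ?_
  rw [mul_smul_comm]

lemma collapse_counit_smul {z : H} {ι : Type*} (rz : Coalgebra.Repr k z ι) (c : R) :
    ∑ l ∈ rz.index, (CoalgebraStruct.counit (R := k) (rz.left l) *
        CoalgebraStruct.counit (R := k) (rz.right l)) • c
      = CoalgebraStruct.counit (R := k) z • c := by
  have h := sum_counit_smul rz (CoalgebraStruct.counit (R := k) (A := H))
  rw [← Finset.sum_smul]
  have h2 : ∑ l ∈ rz.index, CoalgebraStruct.counit (R := k) (rz.left l) *
      CoalgebraStruct.counit (R := k) (rz.right l) = CoalgebraStruct.counit (R := k) z := by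
    simpa [smul_eq_mul] using h
  rw [h2]

-- value lemmas
lemma conv_e1_e12 (f g : H ⊗[k] H →ₗ[k] R) (x y z : H) :
    conv (f ∘ₗ e1 k H) (g ∘ₗ e12 k H) ((x ⊗ₜ[k] y) ⊗ₜ[k] z)
      = ∑ i ∈ (ℛ k x).index, ∑ j ∈ (ℛ k y).index,
          f ((ℛ k x).left i ⊗ₜ[k] (ℛ k y).left j) *
            g (((ℛ k x).right i * (ℛ k y).right j) ⊗ₜ[k] z) := by
  rw [conv_tmul3]
  refine Finset.sum_congr rfl fun i _ => Finset.sum_congr rfl fun j _ => ?_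
  simp only [LinearMap.comp_apply, e1_tmul, e12_tmul, map_smul]
  have h := collapse_scalar_left (ℛ k z) (f ((ℛ k x).left i ⊗ₜ[k] (ℛ k y).left j))
    (g ∘ₗ TensorProduct.mk k H H ((ℛ k x).right i * (ℛ k y).right j))
  simp only [LinearMap.comp_apply, TensorProduct.mk_apply] at h
  exact h

lemma conv_e12_e1 (f g : H ⊗[k] H →ₗ[k] R) (x y z : H) :
    conv (f ∘ₗ e12 k H) (g ∘ₗ e1 k H) ((x ⊗ₜ[k] y) ⊗ₜ[k] z)
      = ∑ i ∈ (ℛ k x).index, ∑ j ∈ (ℛ k y).index,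
          f (((ℛ k x).left i * (ℛ k y).left j) ⊗ₜ[k] z) *
            g ((ℛ k x).right i ⊗ₜ[k] (ℛ k y).right j) := by
  rw [conv_tmul3]
  refine Finset.sum_congr rfl fun i _ => Finset.sum_congr rfl fun j _ => ?_
  simp only [LinearMap.comp_apply, e1_tmul, e12_tmul, map_smul]
  have h := collapse_scalar_right (ℛ k z) (g ((ℛ k x).right i ⊗ₜ[k] (ℛ k y).right j))
    (f ∘ₗ TensorProduct.mk k H H ((ℛ k x).left i * (ℛ k y).left j))
  simp only [LinearMap.comp_apply, TensorProduct.mk_apply] at h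
  exact h

lemma conv_e2_e23 (f g : H ⊗[k] H →ₗ[k] R) (x y z : H) :
    conv (f ∘ₗ e2 k H) (g ∘ₗ e23 k H) ((x ⊗ₜ[k] y) ⊗ₜ[k] z)
      = ∑ j ∈ (ℛ k y).index, ∑ l ∈ (ℛ k z).index,
          f ((ℛ k y).left j ⊗ₜ[k] (ℛ k z).left l) *
            g (x ⊗ₜ[k] ((ℛ k y).right j * (ℛ k z).right l)) := by
  rw [conv_tmul3, Finset.sum_comm]
  refine Finset.sum_congr rfl fun j _ => ?_
  rw [Finset.sum_comm]
  refine Finset.sum_congr rfl fun l _ => ?_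
  simp only [LinearMap.comp_apply, e2_tmul, e23_tmul, map_smul]
  have h := collapse_scalar_left (ℛ k x) (f ((ℛ k y).left j ⊗ₜ[k] (ℛ k z).left l))
    (g ∘ₗ (TensorProduct.mk k H H).flip ((ℛ k y).right j * (ℛ k z).right l))
  simp only [LinearMap.comp_apply, LinearMap.flip_apply, TensorProduct.mk_apply] at h
  exact h

lemma conv_e23_e2 (f g : H ⊗[k] H →ₗ[k] R) (x y z : H) :
    conv (f ∘ₗ e23 k H) (g ∘ₗ e2 k H) ((x ⊗ₜ[k] y) ⊗ₜ[k] z)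
      = ∑ j ∈ (ℛ k y).index, ∑ l ∈ (ℛ k z).index,
          f (x ⊗ₜ[k] ((ℛ k y).left j * (ℛ k z).left l)) *
            g ((ℛ k y).right j ⊗ₜ[k] (ℛ k z).right l) := by
  rw [conv_tmul3, Finset.sum_comm]
  refine Finset.sum_congr rfl fun j _ => ?_
  rw [Finset.sum_comm]
  refine Finset.sum_congr rfl fun l _ => ?_
  simp only [LinearMap.comp_apply, e2_tmul, e23_tmul, map_smul]
  have h := collapse_scalar_right (ℛ k x) (g ((ℛ k y).right j ⊗ₜ[k] (ℛ k z).right l))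
    (f ∘ₗ (TensorProduct.mk k H H).flip ((ℛ k y).left j * (ℛ k z).left l))
  simp only [LinearMap.comp_apply, LinearMap.flip_apply, TensorProduct.mk_apply] at h
  exact h

end Cocycle

section Cocycle2
open Coalgebra
variable {k : Type*} [Field k] {H : Type*} [Ring H] [HopfAlgebra k H]
variable {R : Type*} [CommRing R] [Algebra k R]

lemma comm1 {τ : H ⊗[k] H →ₗ[k] R} (hτ : IsLazy2 k H R τ) (σ : H ⊗[k] H →ₗ[k] R) :
    conv (τ ∘ₗ e1 k H) (σ ∘ₗ e12 k H) = conv (σ ∘ₗ e12 k H) (τ ∘ₗ e1 k H) := by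
  refine TensorProduct.ext_threefold fun x y z => ?_
  rw [conv_e1_e12, conv_e12_e1]
  have key := congrArg (⇑(LinearMap.mul' k R ∘ₗ
    LinearMap.lTensor R (σ ∘ₗ (TensorProduct.mk k H H).flip z)))
    (lazy_sum hτ x y (ℛ k x) (ℛ k y))
  simp only [map_sum, LinearMap.comp_apply, LinearMap.lTensor_tmul, LinearMap.mul'_apply,
    LinearMap.flip_apply, TensorProduct.mk_apply] at key
  rw [key]
  exact Finset.sum_congr rfl fun i _ => Finset.sum_congr rfl fun j _ => mul_comm _ _

lemma comm2 {τ : H ⊗[k] H →ₗ[k] R} (hτ : IsLazy2 k H R τ) (σ : H ⊗[k] H →ₗ[k] R) :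
    conv (τ ∘ₗ e2 k H) (σ ∘ₗ e23 k H) = conv (σ ∘ₗ e23 k H) (τ ∘ₗ e2 k H) := by
  refine TensorProduct.ext_threefold fun x y z => ?_
  rw [conv_e2_e23, conv_e23_e2]
  have key := congrArg (⇑(LinearMap.mul' k R ∘ₗ
    LinearMap.lTensor R (σ ∘ₗ TensorProduct.mk k H H x)))
    (lazy_sum hτ y z (ℛ k y) (ℛ k z))
  simp only [map_sum, LinearMap.comp_apply, LinearMap.lTensor_tmul, LinearMap.mul'_apply,
    TensorProduct.mk_apply] at key
  rw [key]
  exact Finset.sum_congr rfl fun j _ => Finset.sum_congr rfl fun l _ => mul_comm _ _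

lemma hom_e1 (σ τ : H ⊗[k] H →ₗ[k] R) :
    (conv σ τ) ∘ₗ e1 k H = conv (σ ∘ₗ e1 k H) (τ ∘ₗ e1 k H) := by
  refine TensorProduct.ext_threefold fun x y z => ?_
  rw [LinearMap.comp_apply, e1_tmul, map_smul,
    conv_tmul σ τ (ℛ k x) (ℛ k y), conv_tmul3, Finset.smul_sum]
  refine Finset.sum_congr rfl fun i _ => ?_
  rw [Finset.smul_sum]
  refine Finset.sum_congr rfl fun j _ => ?_
  have step : ∀ l ∈ (ℛ k z).index,
      (σ ∘ₗ e1 k H) (((ℛ k x).left i ⊗ₜ[k] (ℛ k y).left j) ⊗ₜ[k] (ℛ k z).left l) *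
        (τ ∘ₗ e1 k H) (((ℛ k x).right i ⊗ₜ[k] (ℛ k y).right j) ⊗ₜ[k] (ℛ k z).right l)
      = (CoalgebraStruct.counit (R := k) ((ℛ k z).left l) *
          CoalgebraStruct.counit (R := k) ((ℛ k z).right l)) •
        (σ ((ℛ k x).left i ⊗ₜ[k] (ℛ k y).left j) *
          τ ((ℛ k x).right i ⊗ₜ[k] (ℛ k y).right j)) := by
    intro l _
    simp only [LinearMap.comp_apply, e1_tmul, map_smul]
    rw [smul_mul_assoc, mul_smul_comm, smul_smul]
  rw [Finset.sum_congr rfl step, collapse_counit_smul]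

lemma hom_e2 (σ τ : H ⊗[k] H →ₗ[k] R) :
    (conv σ τ) ∘ₗ e2 k H = conv (σ ∘ₗ e2 k H) (τ ∘ₗ e2 k H) := by
  refine TensorProduct.ext_threefold fun x y z => ?_
  have lhs_eq : ((conv σ τ) ∘ₗ e2 k H) ((x ⊗ₜ[k] y) ⊗ₜ[k] z)
      = ∑ j ∈ (ℛ k y).index, ∑ l ∈ (ℛ k z).index,
          CoalgebraStruct.counit (R := k) x •
            (σ ((ℛ k y).left j ⊗ₜ[k] (ℛ k z).left l) *
              τ ((ℛ k y).right j ⊗ₜ[k] (ℛ k z).right l)) := by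
    rw [LinearMap.comp_apply, e2_tmul, map_smul, conv_tmul σ τ (ℛ k y) (ℛ k z),
      Finset.smul_sum]
    exact Finset.sum_congr rfl fun j _ => Finset.smul_sum
  have rhs_eq : conv (σ ∘ₗ e2 k H) (τ ∘ₗ e2 k H) ((x ⊗ₜ[k] y) ⊗ₜ[k] z)
      = ∑ j ∈ (ℛ k y).index, ∑ l ∈ (ℛ k z).index,
          CoalgebraStruct.counit (R := k) x •
            (σ ((ℛ k y).left j ⊗ₜ[k] (ℛ k z).left l) *
              τ ((ℛ k y).right j ⊗ₜ[k] (ℛ k z).right l)) := by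
    rw [conv_tmul3, Finset.sum_comm]
    refine Finset.sum_congr rfl fun j _ => ?_
    rw [Finset.sum_comm]
    refine Finset.sum_congr rfl fun l _ => ?_
    have step : ∀ i ∈ (ℛ k x).index,
        (σ ∘ₗ e2 k H) (((ℛ k x).left i ⊗ₜ[k] (ℛ k y).left j) ⊗ₜ[k] (ℛ k z).left l) *
          (τ ∘ₗ e2 k H) (((ℛ k x).right i ⊗ₜ[k] (ℛ k y).right j) ⊗ₜ[k] (ℛ k z).right l)
        = (CoalgebraStruct.counit (R := k) ((ℛ k x).left i) *
            CoalgebraStruct.counit (R := k) ((ℛ k x).right i)) •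
          (σ ((ℛ k y).left j ⊗ₜ[k] (ℛ k z).left l) *
            τ ((ℛ k y).right j ⊗ₜ[k] (ℛ k z).right l)) := by
      intro i _
      simp only [LinearMap.comp_apply, e2_tmul, map_smul]
      rw [smul_mul_assoc, mul_smul_comm, smul_smul]
    rw [Finset.sum_congr rfl step, collapse_counit_smul]
  rw [lhs_eq, rhs_eq]

lemma hom_e12 (σ τ : H ⊗[k] H →ₗ[k] R) :
    (conv σ τ) ∘ₗ e12 k H = conv (σ ∘ₗ e12 k H) (τ ∘ₗ e12 k H) := by
  refine TensorProduct.ext_threefold fun x y z => ?_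
  rw [LinearMap.comp_apply, e12_tmul, conv_tmul σ τ (reprMul (ℛ k x) (ℛ k y)) (ℛ k z),
    conv_tmul3]
  simp only [reprMul]
  rw [Finset.sum_product]
  refine Finset.sum_congr rfl fun i _ => Finset.sum_congr rfl fun j _ =>
    Finset.sum_congr rfl fun l _ => ?_
  simp only [LinearMap.comp_apply, e12_tmul]

lemma hom_e23 (σ τ : H ⊗[k] H →ₗ[k] R) :
    (conv σ τ) ∘ₗ e23 k H = conv (σ ∘ₗ e23 k H) (τ ∘ₗ e23 k H) := by
  refine TensorProduct.ext_threefold fun x y z => ?_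
  rw [LinearMap.comp_apply, e23_tmul, conv_tmul σ τ (ℛ k x) (reprMul (ℛ k y) (ℛ k z)),
    conv_tmul3]
  refine Finset.sum_congr rfl fun i _ => ?_
  simp only [reprMul]
  rw [Finset.sum_product]
  refine Finset.sum_congr rfl fun j _ => Finset.sum_congr rfl fun l _ => ?_
  simp only [LinearMap.comp_apply, e23_tmul]

lemma one_e1 : (convOne : H ⊗[k] H →ₗ[k] R) ∘ₗ e1 k H = convOne := by
  refine TensorProduct.ext_threefold fun x y z => ?_
  rw [LinearMap.comp_apply, e1_tmul, map_smul, convOne_apply, convOne_apply]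
  have h : CoalgebraStruct.counit (R := k) ((x ⊗ₜ[k] y) ⊗ₜ[k] z)
      = CoalgebraStruct.counit (R := k) (x ⊗ₜ[k] y) * CoalgebraStruct.counit (R := k) z := by simp only [TensorProduct.counit_tmul, smul_eq_mul]; ring
  rw [h, Algebra.smul_def, ← map_mul, mul_comm]

lemma one_e2 : (convOne : H ⊗[k] H →ₗ[k] R) ∘ₗ e2 k H = convOne := by
  refine TensorProduct.ext_threefold fun x y z => ?_
  rw [LinearMap.comp_apply, e2_tmul, map_smul, convOne_apply, convOne_apply]
  have h : CoalgebraStruct.counit (R := k) ((x ⊗ₜ[k] y) ⊗ₜ[k] z)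
      = (CoalgebraStruct.counit (R := k) x * CoalgebraStruct.counit (R := k) y) *
          CoalgebraStruct.counit (R := k) z := by simp only [TensorProduct.counit_tmul, smul_eq_mul]; ring
  have h2 : CoalgebraStruct.counit (R := k) (y ⊗ₜ[k] z)
      = CoalgebraStruct.counit (R := k) y * CoalgebraStruct.counit (R := k) z := by simp only [TensorProduct.counit_tmul, smul_eq_mul]; ring
  rw [h, h2, Algebra.smul_def, ← map_mul, mul_assoc]

lemma one_e12 : (convOne : H ⊗[k] H →ₗ[k] R) ∘ₗ e12 k H = convOne := by
  refine TensorProduct.ext_threefold fun x y z => ?_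
  rw [LinearMap.comp_apply, e12_tmul, convOne_apply, convOne_apply]
  have h : CoalgebraStruct.counit (R := k) ((x ⊗ₜ[k] y) ⊗ₜ[k] z)
      = (CoalgebraStruct.counit (R := k) x * CoalgebraStruct.counit (R := k) y) *
          CoalgebraStruct.counit (R := k) z := by simp only [TensorProduct.counit_tmul, smul_eq_mul]; ring
  have h2 : CoalgebraStruct.counit (R := k) ((x * y) ⊗ₜ[k] z)
      = CoalgebraStruct.counit (R := k) (x * y) * CoalgebraStruct.counit (R := k) z := by simp only [TensorProduct.counit_tmul, smul_eq_mul]; ring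
  rw [h, h2, Bialgebra.counit_mul]

lemma one_e23 : (convOne : H ⊗[k] H →ₗ[k] R) ∘ₗ e23 k H = convOne := by
  refine TensorProduct.ext_threefold fun x y z => ?_
  rw [LinearMap.comp_apply, e23_tmul, convOne_apply, convOne_apply]
  have h : CoalgebraStruct.counit (R := k) ((x ⊗ₜ[k] y) ⊗ₜ[k] z)
      = (CoalgebraStruct.counit (R := k) x * CoalgebraStruct.counit (R := k) y) *
          CoalgebraStruct.counit (R := k) z := by simp only [TensorProduct.counit_tmul, smul_eq_mul]; ring
  have h2 : CoalgebraStruct.counit (R := k) (x ⊗ₜ[k] (y * z))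
      = CoalgebraStruct.counit (R := k) x * CoalgebraStruct.counit (R := k) (y * z) := by simp only [TensorProduct.counit_tmul, smul_eq_mul]; ring
  rw [h, h2, Bialgebra.counit_mul, mul_assoc]

end Cocycle2

section Cocycle3
open Coalgebra
variable {k : Type*} [Field k] {H : Type*} [Ring H] [HopfAlgebra k H]
variable {R : Type*} [CommRing R] [Algebra k R]

lemma cocycleLHS_val (σ : H ⊗[k] H →ₗ[k] R) (x y z : H) :
    cocycleLHS k H R σ ((x ⊗ₜ[k] y) ⊗ₜ[k] z)
      = conv (σ ∘ₗ e1 k H) (σ ∘ₗ e12 k H) ((x ⊗ₜ[k] y) ⊗ₜ[k] z) := by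
  rw [conv_e1_e12]
  rw [show cocycleLHS k H R σ ((x ⊗ₜ[k] y) ⊗ₜ[k] z)
      = (LinearMap.mul' k R) (TensorProduct.map σ
          (σ ∘ₗ TensorProduct.map (LinearMap.mul' k H) LinearMap.id)
          ((TensorProduct.assoc k (H ⊗[k] H) (H ⊗[k] H) H).toLinearMap
            ((Coalgebra.comul (R := k) (x ⊗ₜ[k] y)) ⊗ₜ[k] z))) from rfl]
  rw [← (reprTmul (ℛ k x) (ℛ k y)).eq]
  simp only [TensorProduct.sum_tmul, map_sum, LinearEquiv.coe_coe, TensorProduct.assoc_tmul,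
    TensorProduct.map_tmul, LinearMap.comp_apply, LinearMap.id_apply,
    LinearMap.mul'_apply, reprTmul, Finset.sum_product]

lemma cocycleRHS_val (σ : H ⊗[k] H →ₗ[k] R) (x y z : H) :
    cocycleRHS k H R σ (x ⊗ₜ[k] (y ⊗ₜ[k] z))
      = conv (σ ∘ₗ e2 k H) (σ ∘ₗ e23 k H) ((x ⊗ₜ[k] y) ⊗ₜ[k] z) := by
  rw [conv_e2_e23]
  rw [show cocycleRHS k H R σ (x ⊗ₜ[k] (y ⊗ₜ[k] z))
      = (LinearMap.mul' k R) (TensorProduct.map σ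
          (σ ∘ₗ TensorProduct.map LinearMap.id (LinearMap.mul' k H))
          ((TensorProduct.leftComm k H (H ⊗[k] H) (H ⊗[k] H)).toLinearMap
            (x ⊗ₜ[k] (Coalgebra.comul (R := k) (y ⊗ₜ[k] z))))) from rfl]
  rw [← (reprTmul (ℛ k y) (ℛ k z)).eq]
  simp only [TensorProduct.tmul_sum, map_sum, LinearEquiv.coe_coe, TensorProduct.leftComm_tmul,
    TensorProduct.map_tmul, LinearMap.comp_apply, LinearMap.id_apply,
    LinearMap.mul'_apply, reprTmul, Finset.sum_product]

lemma isCocycle_iff (σ : H ⊗[k] H →ₗ[k] R) :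
    IsCocycle k H R σ ↔
      conv (σ ∘ₗ e1 k H) (σ ∘ₗ e12 k H) = conv (σ ∘ₗ e2 k H) (σ ∘ₗ e23 k H) := by
  constructor
  · intro h
    refine TensorProduct.ext_threefold fun x y z => ?_
    rw [← cocycleLHS_val, ← cocycleRHS_val]
    exact h x y z
  · intro h x y z
    rw [cocycleLHS_val, cocycleRHS_val, h]

end Cocycle3


end LazyAux

namespace LazyAux
section Main
variable (k : Type*) [Field k] (H : Type*) [Ring H] [HopfAlgebra k H]
variable (R : Type*) [CommRing R] [Algebra k R]

lemma conv2_eq (σ τ : H ⊗[k] H →ₗ[k] R) : conv2 k H R σ τ = conv σ τ := rfl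

lemma convUnit2_eq : convUnit2 k H R = convOne := rfl

lemma laws2 (A : Type*) [Semiring A] [Algebra k A] : ConvLaws k (H ⊗[k] H) A :=
  convLaws_tensor convLaws_base

lemma laws3 : ConvLaws k ((H ⊗[k] H) ⊗[k] H) R :=
  convLaws_tensor (convLaws_tensor convLaws_base)

variable {k H R}

/-- `σ ↦ (t ↦ σ t ⊗ 1)` into `R ⊗ H`. -/
noncomputable def jmap (σ : H ⊗[k] H →ₗ[k] R) : H ⊗[k] H →ₗ[k] (R ⊗[k] H) :=
  ((TensorProduct.mk k R H).flip 1) ∘ₗ σ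

/-- `x ⊗ y ↦ 1 ⊗ xy` into `R ⊗ H`. -/
noncomputable def mmap : H ⊗[k] H →ₗ[k] (R ⊗[k] H) :=
  (TensorProduct.mk k R H 1) ∘ₗ LinearMap.mul' k H

lemma jmap_apply (σ : H ⊗[k] H →ₗ[k] R) (t : H ⊗[k] H) :
    jmap σ t = σ t ⊗ₜ[k] (1 : H) := rfl

lemma mmap_tmul (x y : H) : (mmap (k := k) (H := H) (R := R)) (x ⊗ₜ[k] y)
    = (1 : R) ⊗ₜ[k] (x * y) := rfl

lemma conv_jmap_mmap (σ : H ⊗[k] H →ₗ[k] R) (x y : H) :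
    conv (jmap σ) mmap (x ⊗ₜ[k] y)
      = TensorProduct.map σ (LinearMap.mul' k H)
          (Coalgebra.comul (R := k) (x ⊗ₜ[k] y)) := by
  rw [conv_tmul _ _ (Coalgebra.Repr.arbitrary k x) (Coalgebra.Repr.arbitrary k y),
    ← (reprTmul (Coalgebra.Repr.arbitrary k x) (Coalgebra.Repr.arbitrary k y)).eq]
  simp [reprTmul, Finset.sum_product, jmap_apply, mmap_tmul,
    Algebra.TensorProduct.tmul_mul_tmul]

lemma conv_mmap_jmap (σ : H ⊗[k] H →ₗ[k] R) (x y : H) :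
    conv mmap (jmap σ) (x ⊗ₜ[k] y)
      = TensorProduct.map σ (LinearMap.mul' k H)
          ((TensorProduct.comm k (H ⊗[k] H) (H ⊗[k] H))
            (Coalgebra.comul (R := k) (x ⊗ₜ[k] y))) := by
  rw [conv_tmul _ _ (Coalgebra.Repr.arbitrary k x) (Coalgebra.Repr.arbitrary k y),
    ← (reprTmul (Coalgebra.Repr.arbitrary k x) (Coalgebra.Repr.arbitrary k y)).eq]
  simp [reprTmul, Finset.sum_product, jmap_apply, mmap_tmul,
    Algebra.TensorProduct.tmul_mul_tmul]

lemma isLazy2_iff (σ : H ⊗[k] H →ₗ[k] R) :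
    IsLazy2 k H R σ ↔ conv (jmap σ) mmap = conv mmap (jmap σ) := by
  constructor
  · intro h
    exact TensorProduct.ext' fun x y => by
      rw [conv_jmap_mmap, conv_mmap_jmap]; exact h x y
  · intro h x y
    rw [← conv_jmap_mmap, ← conv_mmap_jmap, h]

lemma jmap_conv (σ τ : H ⊗[k] H →ₗ[k] R) :
    jmap (conv σ τ) = conv (jmap σ) (jmap τ) := by
  refine TensorProduct.ext' fun x y => ?_
  rw [conv_tmul _ _ (Coalgebra.Repr.arbitrary k x) (Coalgebra.Repr.arbitrary k y),
    jmap_apply, conv_tmul _ _ (Coalgebra.Repr.arbitrary k x) (Coalgebra.Repr.arbitrary k y)]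
  simp [jmap_apply, Algebra.TensorProduct.tmul_mul_tmul, TensorProduct.sum_tmul]

lemma jmap_one : jmap (convOne : H ⊗[k] H →ₗ[k] R) = convOne := by
  refine TensorProduct.ext' fun x y => ?_
  rw [jmap_apply, convOne_apply, convOne_apply]
  rw [Algebra.TensorProduct.algebraMap_apply]

lemma jmap_injective : Function.Injective (jmap (k := k) (H := H) (R := R)) := by
  intro σ τ h
  have : ∀ f : H ⊗[k] H →ₗ[k] R,
      ((TensorProduct.rid k R).toLinearMap ∘ₗ
        LinearMap.lTensor R (CoalgebraStruct.counit (R := k) (A := H))) ∘ₗ jmap f = f := by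
    intro f
    ext t
    simp [jmap_apply, Bialgebra.counit_one]
  rw [← this σ, ← this τ, h]

lemma IsLazy2.conv {σ τ : H ⊗[k] H →ₗ[k] R} (hσ : IsLazy2 k H R σ) (hτ : IsLazy2 k H R τ) :
    IsLazy2 k H R (LazyAux.conv σ τ) := by
  rw [isLazy2_iff] at hσ hτ ⊢
  rw [jmap_conv]
  exact (laws2 k H (R ⊗[k] H)).commute_mul hσ hτ

lemma IsLazy2.one : IsLazy2 k H R (convOne) := by
  rw [isLazy2_iff, jmap_one, (laws2 k H (R ⊗[k] H)).2.1, (laws2 k H (R ⊗[k] H)).2.2]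

lemma IsLazy2.inv {σ σ' : H ⊗[k] H →ₗ[k] R} (hσ : IsLazy2 k H R σ)
    (h1 : LazyAux.conv σ σ' = convOne) (h2 : LazyAux.conv σ' σ = convOne) :
    IsLazy2 k H R σ' := by
  rw [isLazy2_iff] at hσ ⊢
  exact (laws2 k H (R ⊗[k] H)).commute_inv hσ
    (by rw [← jmap_conv, h1, jmap_one]) (by rw [← jmap_conv, h2, jmap_one])

end Main

section Norm
variable {k : Type*} [Field k] {H : Type*} [Ring H] [HopfAlgebra k H]
variable {R : Type*} [CommRing R] [Algebra k R]

/-- The trivial representation of `comul 1`. -/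
noncomputable def reprOne : Coalgebra.Repr k (1 : H) Unit where
  index := {Unit.unit}
  left _ := 1
  right _ := 1
  eq := by
    rw [Finset.sum_singleton, Bialgebra.comul_one, Algebra.TensorProduct.one_def]

lemma sum_counit_counit {x : H} {ι : Type*} (r : Coalgebra.Repr k x ι) :
    ∑ i ∈ r.index, CoalgebraStruct.counit (R := k) (r.left i) *
      CoalgebraStruct.counit (R := k) (r.right i) = CoalgebraStruct.counit (R := k) x := by
  have := sum_counit_smul r (CoalgebraStruct.counit (R := k) (A := H))
  simpa [smul_eq_mul] using this

lemma IsNormalized2.one : IsNormalized2 k H R convOne := by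
  constructor <;> intro x <;> rw [convOne_apply]
  · have h : CoalgebraStruct.counit (R := k) (x ⊗ₜ[k] (1 : H))
        = CoalgebraStruct.counit (R := k) x * CoalgebraStruct.counit (R := k) (1 : H) := by simp only [TensorProduct.counit_tmul, smul_eq_mul]; ring
    rw [h, Bialgebra.counit_one, mul_one]
  · have h : CoalgebraStruct.counit (R := k) ((1 : H) ⊗ₜ[k] x)
        = CoalgebraStruct.counit (R := k) (1 : H) * CoalgebraStruct.counit (R := k) x := by simp only [TensorProduct.counit_tmul, smul_eq_mul]; ring
    rw [h, Bialgebra.counit_one, one_mul]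

lemma IsNormalized2.conv {σ τ : H ⊗[k] H →ₗ[k] R} (hσ : IsNormalized2 k H R σ)
    (hτ : IsNormalized2 k H R τ) : IsNormalized2 k H R (LazyAux.conv σ τ) := by
  constructor
  · intro x
    rw [conv_tmul _ _ (Coalgebra.Repr.arbitrary k x) (reprOne (k := k) (H := H))]
    simp only [reprOne, Finset.sum_singleton]
    calc ∑ i ∈ (Coalgebra.Repr.arbitrary k x).index,
          σ ((Coalgebra.Repr.arbitrary k x).left i ⊗ₜ[k] (1 : H)) *
            τ ((Coalgebra.Repr.arbitrary k x).right i ⊗ₜ[k] (1 : H))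
        = ∑ i ∈ (Coalgebra.Repr.arbitrary k x).index,
            algebraMap k R (CoalgebraStruct.counit (R := k)
              ((Coalgebra.Repr.arbitrary k x).left i) *
              CoalgebraStruct.counit (R := k) ((Coalgebra.Repr.arbitrary k x).right i)) := by
          refine Finset.sum_congr rfl fun i _ => ?_
          rw [hσ.1, hτ.1, map_mul]
      _ = algebraMap k R (CoalgebraStruct.counit (R := k) x) := by
          rw [← map_sum, sum_counit_counit]
  · intro x
    rw [conv_tmul _ _ (reprOne (k := k) (H := H)) (Coalgebra.Repr.arbitrary k x)]
    simp only [reprOne, Finset.sum_singleton]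
    calc ∑ i ∈ (Coalgebra.Repr.arbitrary k x).index,
          σ ((1 : H) ⊗ₜ[k] (Coalgebra.Repr.arbitrary k x).left i) *
            τ ((1 : H) ⊗ₜ[k] (Coalgebra.Repr.arbitrary k x).right i)
        = ∑ i ∈ (Coalgebra.Repr.arbitrary k x).index,
            algebraMap k R (CoalgebraStruct.counit (R := k)
              ((Coalgebra.Repr.arbitrary k x).left i) *
              CoalgebraStruct.counit (R := k) ((Coalgebra.Repr.arbitrary k x).right i)) := by
          refine Finset.sum_congr rfl fun i _ => ?_
          rw [hσ.2, hτ.2, map_mul]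
      _ = algebraMap k R (CoalgebraStruct.counit (R := k) x) := by
          rw [← map_sum, sum_counit_counit]

lemma IsNormalized2.inv {σ σ' : H ⊗[k] H →ₗ[k] R} (hσ : IsNormalized2 k H R σ)
    (h1 : LazyAux.conv σ σ' = convOne) : IsNormalized2 k H R σ' := by
  constructor
  · intro x
    have h := congrArg (fun f : H ⊗[k] H →ₗ[k] R => f (x ⊗ₜ[k] (1 : H))) h1
    rw [conv_tmul _ _ (Coalgebra.Repr.arbitrary k x) (reprOne (k := k) (H := H)),
      convOne_apply] at h
    simp only [reprOne, Finset.sum_singleton] at h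
    have hε : CoalgebraStruct.counit (R := k) (x ⊗ₜ[k] (1 : H))
        = CoalgebraStruct.counit (R := k) x := by
      have h' : CoalgebraStruct.counit (R := k) (x ⊗ₜ[k] (1 : H))
          = CoalgebraStruct.counit (R := k) x * CoalgebraStruct.counit (R := k) (1 : H) := by simp only [TensorProduct.counit_tmul, smul_eq_mul]; ring
      rw [h', Bialgebra.counit_one, mul_one]
    rw [hε] at h
    rw [← h]
    have key : ∀ i ∈ (Coalgebra.Repr.arbitrary k x).index,
        σ ((Coalgebra.Repr.arbitrary k x).left i ⊗ₜ[k] (1 : H)) *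
          σ' ((Coalgebra.Repr.arbitrary k x).right i ⊗ₜ[k] (1 : H))
        = CoalgebraStruct.counit (R := k) ((Coalgebra.Repr.arbitrary k x).left i) •
          (σ' ∘ₗ (TensorProduct.mk k H H).flip (1 : H))
            ((Coalgebra.Repr.arbitrary k x).right i) := by
      intro i _
      rw [hσ.1, Algebra.smul_def]
      rfl
    rw [Finset.sum_congr rfl key, sum_counit_smul]
    rfl
  · intro x
    have h := congrArg (fun f : H ⊗[k] H →ₗ[k] R => f ((1 : H) ⊗ₜ[k] x)) h1
    rw [conv_tmul _ _ (reprOne (k := k) (H := H)) (Coalgebra.Repr.arbitrary k x),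
      convOne_apply] at h
    simp only [reprOne, Finset.sum_singleton] at h
    have hε : CoalgebraStruct.counit (R := k) ((1 : H) ⊗ₜ[k] x)
        = CoalgebraStruct.counit (R := k) x := by
      have h' : CoalgebraStruct.counit (R := k) ((1 : H) ⊗ₜ[k] x)
          = CoalgebraStruct.counit (R := k) (1 : H) * CoalgebraStruct.counit (R := k) x := by simp only [TensorProduct.counit_tmul, smul_eq_mul]; ring
      rw [h', Bialgebra.counit_one, one_mul]
    rw [hε] at h
    rw [← h]
    have key : ∀ i ∈ (Coalgebra.Repr.arbitrary k x).index,
        σ ((1 : H) ⊗ₜ[k] (Coalgebra.Repr.arbitrary k x).left i) *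
          σ' ((1 : H) ⊗ₜ[k] (Coalgebra.Repr.arbitrary k x).right i)
        = CoalgebraStruct.counit (R := k) ((Coalgebra.Repr.arbitrary k x).left i) •
          (σ' ∘ₗ TensorProduct.mk k H H (1 : H))
            ((Coalgebra.Repr.arbitrary k x).right i) := by
      intro i _
      rw [hσ.2, Algebra.smul_def]
      rfl
    rw [Finset.sum_congr rfl key, sum_counit_smul]
    rfl

lemma ConvLaws.mul_inv {C A : Type*} [AddCommMonoid C] [Module k C] [CoalgebraStruct k C]
    [Semiring A] [Algebra k A] (hL : ConvLaws k C A) {a a' b b' : C →ₗ[k] A}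
    (ha : LazyAux.conv a a' = convOne) (hb : LazyAux.conv b b' = convOne) :
    LazyAux.conv (LazyAux.conv a b) (LazyAux.conv b' a') = convOne := by
  rw [hL.1 a b, ← hL.1 b b', hb, hL.2.2, ha]

end Norm


section Final
open Coalgebra
variable {k : Type*} [Field k] {H : Type*} [Ring H] [HopfAlgebra k H]
variable {R : Type*} [CommRing R] [Algebra k R]

lemma IsCocycle.one' : IsCocycle k H R convOne := by
  rw [isCocycle_iff, one_e1, one_e2, one_e12, one_e23]

lemma IsCocycle.conv' {σ τ : H ⊗[k] H →ₗ[k] R} (hσ : IsCocycle k H R σ)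
    (hτ : IsCocycle k H R τ) (hτl : IsLazy2 k H R τ) :
    IsCocycle k H R (conv σ τ) := by
  rw [isCocycle_iff] at hσ hτ ⊢
  have L := laws3 k H R
  have c1 : conv (τ ∘ₗ e1 k H) (σ ∘ₗ e12 k H) = conv (σ ∘ₗ e12 k H) (τ ∘ₗ e1 k H) :=
    comm1 hτl σ
  have c2 : conv (τ ∘ₗ e2 k H) (σ ∘ₗ e23 k H) = conv (σ ∘ₗ e23 k H) (τ ∘ₗ e2 k H) :=
    comm2 hτl σ
  rw [hom_e1, hom_e12, hom_e2, hom_e23]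
  calc conv (conv (σ ∘ₗ e1 k H) (τ ∘ₗ e1 k H)) (conv (σ ∘ₗ e12 k H) (τ ∘ₗ e12 k H))
      = conv (σ ∘ₗ e1 k H) (conv (conv (τ ∘ₗ e1 k H) (σ ∘ₗ e12 k H)) (τ ∘ₗ e12 k H)) := by
        rw [L.1, L.1]
    _ = conv (σ ∘ₗ e1 k H) (conv (conv (σ ∘ₗ e12 k H) (τ ∘ₗ e1 k H)) (τ ∘ₗ e12 k H)) := by
        rw [c1]
    _ = conv (conv (σ ∘ₗ e1 k H) (σ ∘ₗ e12 k H)) (conv (τ ∘ₗ e1 k H) (τ ∘ₗ e12 k H)) := by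
        rw [L.1, ← L.1 (σ ∘ₗ e1 k H), ← L.1]
    _ = conv (conv (σ ∘ₗ e2 k H) (σ ∘ₗ e23 k H)) (conv (τ ∘ₗ e2 k H) (τ ∘ₗ e23 k H)) := by
        rw [hσ, hτ]
    _ = conv (σ ∘ₗ e2 k H) (conv (conv (σ ∘ₗ e23 k H) (τ ∘ₗ e2 k H)) (τ ∘ₗ e23 k H)) := by
        rw [L.1, ← L.1 (σ ∘ₗ e23 k H) (τ ∘ₗ e2 k H) (τ ∘ₗ e23 k H)]
    _ = conv (σ ∘ₗ e2 k H) (conv (conv (τ ∘ₗ e2 k H) (σ ∘ₗ e23 k H)) (τ ∘ₗ e23 k H)) := by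
        rw [c2]
    _ = conv (conv (σ ∘ₗ e2 k H) (τ ∘ₗ e2 k H)) (conv (σ ∘ₗ e23 k H) (τ ∘ₗ e23 k H)) := by
        rw [L.1 (τ ∘ₗ e2 k H) (σ ∘ₗ e23 k H) (τ ∘ₗ e23 k H),
          ← L.1 (σ ∘ₗ e2 k H) (τ ∘ₗ e2 k H) (conv (σ ∘ₗ e23 k H) (τ ∘ₗ e23 k H))]

lemma IsCocycle.inv' {σ σ' : H ⊗[k] H →ₗ[k] R} (hσ : IsCocycle k H R σ)
    (hσ'l : IsLazy2 k H R σ')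
    (h1 : conv σ σ' = convOne) (h2 : conv σ' σ = convOne) :
    IsCocycle k H R σ' := by
  rw [isCocycle_iff] at hσ ⊢
  have L := laws3 k H R
  have i1 : conv (σ ∘ₗ e1 k H) (σ' ∘ₗ e1 k H) = convOne := by
    rw [← hom_e1, h1, one_e1]
  have i12 : conv (σ ∘ₗ e12 k H) (σ' ∘ₗ e12 k H) = convOne := by
    rw [← hom_e12, h1, one_e12]
  have i2' : conv (σ' ∘ₗ e2 k H) (σ ∘ₗ e2 k H) = convOne := by
    rw [← hom_e2, h2, one_e2]
  have i23' : conv (σ' ∘ₗ e23 k H) (σ ∘ₗ e23 k H) = convOne := by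
    rw [← hom_e23, h2, one_e23]
  have hA : conv (conv (σ ∘ₗ e1 k H) (σ ∘ₗ e12 k H))
      (conv (σ' ∘ₗ e12 k H) (σ' ∘ₗ e1 k H)) = convOne :=
    L.mul_inv i1 i12
  have hB : conv (conv (σ' ∘ₗ e23 k H) (σ' ∘ₗ e2 k H))
      (conv (σ ∘ₗ e2 k H) (σ ∘ₗ e23 k H)) = convOne :=
    L.mul_inv i23' i2'
  rw [← hσ] at hB
  have huniq : conv (σ' ∘ₗ e12 k H) (σ' ∘ₗ e1 k H)
      = conv (σ' ∘ₗ e23 k H) (σ' ∘ₗ e2 k H) :=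
    L.inv_unique hA hB
  rw [comm1 hσ'l σ', comm2 hσ'l σ', huniq]

end Final

end LazyAux

/-- the convolution product of two convolution-invertible
normalized lazy left 2-cocycles is again one; in particular `Z²_ℓ(H,R)` is a
group under convolution (it contains the convolution unit, is closed under
convolution, and contains the convolution inverse of each of its elements). -/
theorem Z2ℓ_group :
    (∀ σ τ : H ⊗[k] H →ₗ[k] R, MemZ2ℓ k H R σ → MemZ2ℓ k H R τ →
      MemZ2ℓ k H R (conv2 k H R σ τ)) ∧
    MemZ2ℓ k H R (convUnit2 k H R) ∧
    (∀ σ σ' : H ⊗[k] H →ₗ[k] R, MemZ2ℓ k H R σ →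
      conv2 k H R σ σ' = convUnit2 k H R →
      conv2 k H R σ' σ = convUnit2 k H R → MemZ2ℓ k H R σ') := by
  have e : ∀ a b : H ⊗[k] H →ₗ[k] R, conv2 k H R a b = LazyAux.conv a b := fun _ _ => rfl
  have eu : convUnit2 k H R = LazyAux.convOne := rfl
  refine ⟨?_, ?_, ?_⟩
  · rintro σ τ ⟨⟨σ', hσ1, hσ2⟩, hσn, hσl, hσc⟩ ⟨⟨τ', hτ1, hτ2⟩, hτn, hτl, hτc⟩
    rw [e, eu] at hσ1 hσ2 hτ1 hτ2
    refine ⟨⟨LazyAux.conv τ' σ', ?_, ?_⟩, ?_, ?_, ?_⟩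
    · rw [e, eu]
      exact (LazyAux.laws2 k H R).mul_inv hσ1 hτ1
    · rw [e, eu]
      exact (LazyAux.laws2 k H R).mul_inv hτ2 hσ2
    · rw [e]
      exact LazyAux.IsNormalized2.conv hσn hτn
    · rw [e]
      exact LazyAux.IsLazy2.conv hσl hτl
    · rw [e]
      exact LazyAux.IsCocycle.conv' hσc hτc hτl
  · refine ⟨⟨convUnit2 k H R, ?_, ?_⟩, ?_, ?_, ?_⟩
    · rw [e, eu]
      exact (LazyAux.laws2 k H R).2.1 _
    · rw [e, eu]
      exact (LazyAux.laws2 k H R).2.1 _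
    · rw [eu]
      exact LazyAux.IsNormalized2.one
    · rw [eu]
      exact LazyAux.IsLazy2.one
    · rw [eu]
      exact LazyAux.IsCocycle.one'
  · rintro σ σ' ⟨⟨σ'', hσ1, hσ2⟩, hσn, hσl, hσc⟩ h1 h2
    rw [e, eu] at h1 h2
    refine ⟨⟨σ, ?_, ?_⟩, ?_, ?_, ?_⟩
    · rw [e, eu]
      exact h2
    · rw [e, eu]
      exact h1
    · exact LazyAux.IsNormalized2.inv hσn h1
    · exact LazyAux.IsLazy2.inv hσl h1 h2
    · exact LazyAux.IsCocycle.inv' hσc (LazyAux.IsLazy2.inv hσl h1 h2) h1 h2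

end LazyCocycles
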